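/- Let X be the arrow category 𝟚 = (0 → 1). The unique diagram morphism from the constant diagram at 1 with shape the terminal category to the diagram constant at 1 with shape 𝟙 + 𝟙 induces a bijection on lifts against every representable discrete opfibration (coslice projection x/X → X), but does not induce a bijection on lifts against the discrete opfibration given by the coproduct (1/X) + (1/X) → X. -/

import Mathlib

open CategoryTheory

lemma under_obj_ext {x : Fin 2} (A B : Under x) (h : A.right = B.right) : A = B := by
  obtain ⟨⟨⟩, ar, ah⟩ := A; obtain ⟨⟨⟩, br, bh⟩ := B
  subst h; congr 1; exact Subsingleton.elim _ _

instance under_hom_sub {x : Fin 2} (A B : Under x) : Subsingleton (A ⟶ B) := by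
  constructor; intro f g; ext; exact Subsingleton.elim _ _

/-- The induced function from lifts of `D` to lifts of `E` along a fixed functor
`π : Eb ⥤ X` determined by a `Diag←(X)`-morphism `(R, ρ) : (J, D) ⟶ (K, E)` is a
bijection: every lift `Ebar` of `E` has a unique preimage lift `Db` of `D`, the
preimage relation being witnessed by a natural transformation `R ⋙ Db ⟶ Ebar`
lying over `ρ`. -/
def InducesLiftBijection {X : Type} [Category X] {J K : Type} [Category J] [Category K]
    (D : J ⥤ X) (E : K ⥤ X) (R : K ⥤ J) (ρ : R ⋙ D ⟶ E)
    {Eb : Type} [Category Eb] (π : Eb ⥤ X) : Prop :=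
  ∀ (Ebar : K ⥤ Eb) (hEbar : Ebar ⋙ π = E),
    ∃! Db : { F : J ⥤ Eb // F ⋙ π = D },
      ∃ ρb : R ⋙ Db.1 ⟶ Ebar,
        ∀ k : K, π.map (ρb.app k) =
          eqToHom (Functor.congr_obj Db.2 (R.obj k)) ≫ ρ.app k ≫
            eqToHom (Functor.congr_obj hEbar k).symm

/-- Let `X` be the arrow category `𝟚 = (0 ⟶ 1)` (the preorder `Fin 2`).  The unique
morphism in `Diag←(X)` from the diagram constant at `1` with shape the terminal
category to the diagram constant at `1` with shape `𝟙 + 𝟙` (determined by the unique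
functor `𝟙 + 𝟙 ⥤ 𝟙`) induces a bijection on lifts against every representable discrete
opfibration (coslice projection `x/X ⥤ X`), but does not induce a bijection on lifts
against the discrete opfibration `(1/X) + (1/X) ⥤ X`. -/
theorem representable_lifts_do_not_suffice :
    (∀ x : Fin 2,
      InducesLiftBijection
        ((Functor.const (Discrete PUnit.{1})).obj (1 : Fin 2))
        ((Functor.const (Discrete PUnit.{1} ⊕ Discrete PUnit.{1})).obj (1 : Fin 2))
        ((Functor.const (Discrete PUnit.{1} ⊕ Discrete PUnit.{1})).obj
          (⟨PUnit.unit⟩ : Discrete PUnit.{1}))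
        ⟨fun _ => 𝟙 _, fun _ _ _ => Subsingleton.elim _ _⟩
        (Under.forget x)) ∧
    ¬ InducesLiftBijection
        ((Functor.const (Discrete PUnit.{1})).obj (1 : Fin 2))
        ((Functor.const (Discrete PUnit.{1} ⊕ Discrete PUnit.{1})).obj (1 : Fin 2))
        ((Functor.const (Discrete PUnit.{1} ⊕ Discrete PUnit.{1})).obj
          (⟨PUnit.unit⟩ : Discrete PUnit.{1}))
        ⟨fun _ => 𝟙 _, fun _ _ _ => Subsingleton.elim _ _⟩
        (Functor.sum' (Under.forget (1 : Fin 2)) (Under.forget (1 : Fin 2))) := by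
  constructor
  · intro x Ebar hEbar
    have hA : ∀ k, (Ebar.obj k).right = (1 : Fin 2) := fun k => Functor.congr_obj hEbar k
    set A₀ : Under x := Under.mk (homOfLE (by omega : x ≤ (1 : Fin 2))) with hA₀
    have hDb : (Functor.const (Discrete PUnit.{1})).obj A₀ ⋙ Under.forget x =
        (Functor.const (Discrete PUnit.{1})).obj (1 : Fin 2) := by
      refine CategoryTheory.Functor.ext (fun j => ?_) (fun _ _ _ => Subsingleton.elim _ _)
      obtain ⟨⟨⟩⟩ := j; rfl
    refine ⟨⟨(Functor.const (Discrete PUnit.{1})).obj A₀, hDb⟩, ⟨?_, ?_⟩, ?_⟩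
    · exact ⟨fun k => eqToHom (under_obj_ext A₀ (Ebar.obj k) (hA k).symm),
        fun _ _ _ => Subsingleton.elim _ _⟩
    · intro k; exact Subsingleton.elim _ _
    · rintro ⟨F, hF⟩ -
      refine Subtype.ext ?_
      refine CategoryTheory.Functor.ext (fun j => ?_) (fun _ _ _ => Subsingleton.elim _ _)
      obtain ⟨⟨⟩⟩ := j
      exact under_obj_ext _ _ (Functor.congr_obj hF ⟨PUnit.unit⟩)
  · intro h
    set A₀ : Under (1 : Fin 2) := Under.mk (𝟙 (1 : Fin 2)) with hA₀
    set Ebar := Functor.sum ((Functor.const (Discrete PUnit.{1})).obj A₀)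
      ((Functor.const (Discrete PUnit.{1})).obj A₀) with hEbarDef
    have hEbar : Ebar ⋙ Functor.sum' (Under.forget (1 : Fin 2)) (Under.forget (1 : Fin 2)) =
        (Functor.const (Discrete PUnit.{1} ⊕ Discrete PUnit.{1})).obj (1 : Fin 2) := by
      refine CategoryTheory.Functor.ext (fun j => ?_) (fun _ _ _ => Subsingleton.elim _ _)
      rcases j with ⟨⟨⟩⟩ | ⟨⟨⟩⟩ <;> rfl
    obtain ⟨⟨F, hF⟩, ⟨ρb, -⟩, -⟩ := h Ebar hEbar
    rcases hF' : F.obj ⟨PUnit.unit⟩ with A | A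
    · have t := ρb.app (Sum.inr ⟨PUnit.unit⟩)
      dsimp at t
      rw [hF'] at t
      exact (hom_inl_inr_false (Y := A₀) (f := t)).elim
    · have t := ρb.app (Sum.inl ⟨PUnit.unit⟩)
      dsimp at t
      rw [hF'] at t
      exact (hom_inr_inl_false (Y := A₀) (f := t)).elim
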